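/- Let μ be a finite Borel measure on ℝ^d and (μ_n) a sequence of Borel measures, each absolutely continuous with respect to Lebesgue measure ℒ^d with densities ρ_n satisfying sup_n ‖ρ_n‖_{L²(B)} < ∞ for every ball B ⊂ ℝ^d. If ∫ φ dμ ≤ liminf_n ∫ φ dμ_n for every nonnegative compactly supported continuous φ, then μ is absolutely continuous with respect to ℒ^d, and its density ρ satisfies ‖ρ‖_{L²(B)} ≤ liminf_n ‖ρ_n‖_{L²(B)} for every ball B. -/

import Mathlib

open MeasureTheory Filter Set
open scoped ENNReal NNReal

lemma aux_biInf_mono (u : ℕ → ℝ≥0∞) : Monotone (fun n => ⨅ i ≥ n, u i) :=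
  fun n m hnm => le_iInf₂ fun i him => iInf₂_le i (hnm.trans him)

lemma aux_liminf_add_const (u : ℕ → ℝ≥0∞) (c : ℝ≥0∞) :
    atTop.liminf (fun n => u n + c) ≤ atTop.liminf u + c := by
  rw [liminf_eq_iSup_iInf_of_nat, liminf_eq_iSup_iInf_of_nat]
  refine iSup_le fun n => ?_
  have h1 : (⨅ i ≥ n, (u i + c)) ≤ (⨅ i ≥ n, u i) + c := by
    have e : (⨅ i ≥ n, u i) = ⨅ i : {i // n ≤ i}, u i := by
      exact (iInf_subtype'' {i | n ≤ i} u).symm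
    rw [e, ENNReal.iInf_add, le_iInf_iff]
    exact fun i => iInf₂_le i.1 i.2
  exact h1.trans (add_le_add (le_iSup (fun n => ⨅ i ≥ n, u i) n) le_rfl)

lemma aux_liminf_add (u v : ℕ → ℝ≥0∞) :
    atTop.liminf u + atTop.liminf v ≤ atTop.liminf (fun n => u n + v n) := by
  rw [liminf_eq_iSup_iInf_of_nat, liminf_eq_iSup_iInf_of_nat, liminf_eq_iSup_iInf_of_nat]
  rw [ENNReal.iSup_add_iSup_of_monotone (aux_biInf_mono u) (aux_biInf_mono v)]
  refine iSup_le fun n => le_trans ?_ (le_iSup _ n)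
  exact le_iInf₂ fun i hi => add_le_add (iInf₂_le i hi) (iInf₂_le i hi)

lemma aux_sum_liminf {ι : Type*} (s : Finset ι) (u : ι → ℕ → ℝ≥0∞) :
    ∑ i ∈ s, atTop.liminf (u i) ≤ atTop.liminf (fun n => ∑ i ∈ s, u i n) := by
  classical
  induction s using Finset.induction_on with
  | empty => simp
  | insert _ _ hx ih =>
    rename_i a s
    simp only [Finset.sum_insert hx]
    exact le_trans (add_le_add le_rfl ih) (aux_liminf_add _ _)

lemma aux_mul_liminf (c : ℝ≥0∞) (u : ℕ → ℝ≥0∞) :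
    c * atTop.liminf u ≤ atTop.liminf (fun n => c * u n) := by
  rw [liminf_eq_iSup_iInf_of_nat, liminf_eq_iSup_iInf_of_nat, ENNReal.mul_iSup]
  refine iSup_le fun n => le_trans ?_ (le_iSup _ n)
  exact le_iInf₂ fun i hi => mul_le_mul_right (iInf₂_le i hi) c

lemma aux_two_mul (a b : ℝ≥0∞) : 2 * (a * b) ≤ a ^ 2 + b ^ 2 := by
  rcases eq_or_ne a ⊤ with rfl | ha
  · rcases eq_or_ne b 0 with rfl | hb
    · simp
    · have : (⊤ : ℝ≥0∞) ^ 2 = ⊤ := by simp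
      simp [this]
  rcases eq_or_ne b ⊤ with rfl | hb
  · rcases eq_or_ne a 0 with rfl | ha'
    · simp
    · have : (⊤ : ℝ≥0∞) ^ 2 = ⊤ := by simp
      simp [this]
  lift a to ℝ≥0 using ha
  lift b to ℝ≥0 using hb
  have : (2 : ℝ≥0) * (a * b) ≤ a ^ 2 + b ^ 2 := by
    rw [← NNReal.coe_le_coe]
    push_cast
    nlinarith [sq_nonneg ((a : ℝ) - b)]
  calc (2 : ℝ≥0∞) * (a * b) = ((2 * (a * b) : ℝ≥0) : ℝ≥0∞) := by push_cast; ring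
  _ ≤ ((a ^ 2 + b ^ 2 : ℝ≥0) : ℝ≥0∞) := by exact_mod_cast this
  _ = (a : ℝ≥0∞) ^ 2 + (b : ℝ≥0∞) ^ 2 := by push_cast; ring

section Main
variable {d : ℕ}
local notation "E" => EuclideanSpace ℝ (Fin d)

/-- For open sets, `μ U ≤ liminf μn U`, from weak convergence via Urysohn. -/
lemma aux_open_le (μ : Measure E) [IsFiniteMeasure μ] (μn : ℕ → Measure E)
    (hlim : ∀ φ : E → ℝ, Continuous φ → HasCompactSupport φ → (∀ x, 0 ≤ φ x) →
      ∫⁻ x, ENNReal.ofReal (φ x) ∂μ ≤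
        atTop.liminf fun n => ∫⁻ x, ENNReal.ofReal (φ x) ∂(μn n))
    {U : Set E} (hU : IsOpen U) :
    μ U ≤ atTop.liminf fun n => μn n U := by
  rw [hU.measure_eq_iSup_isCompact]
  refine iSup_le fun K => iSup_le fun hKU => iSup_le fun hK => ?_
  obtain ⟨φ, hφ1, hφ0, hφc, hφI⟩ :=
    exists_continuous_one_zero_of_isCompact hK hU.isClosed_compl
      (Set.disjoint_left.mpr fun x hxK hxU => hxU (hKU hxK))
  have h1 : μ K ≤ ∫⁻ x, ENNReal.ofReal (φ x) ∂μ := by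
    rw [← lintegral_indicator_one hK.measurableSet]
    refine lintegral_mono fun x => ?_
    by_cases hx : x ∈ K
    · simp [hx, hφ1 hx]
    · simp [hx]
  have h2 : ∀ n, ∫⁻ x, ENNReal.ofReal (φ x) ∂(μn n) ≤ μn n U := by
    intro n
    rw [← lintegral_indicator_one hU.measurableSet]
    refine lintegral_mono fun x => ?_
    by_cases hx : x ∈ U
    · simpa [hx] using ENNReal.ofReal_le_one.mpr (hφI x).2
    · simp [hx, hφ0 hx]
  refine h1.trans ((hlim φ φ.continuous hφc fun x => (hφI x).1).trans ?_)
  exact liminf_le_liminf (Eventually.of_forall h2)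

/-- For measurable subsets of balls, `μ A ≤ liminf μn A`. -/
lemma aux_set_le (μ : Measure E) [IsFiniteMeasure μ]
    (ρn : ℕ → E → ENNReal) (hρn : ∀ n, Measurable (ρn n))
    (μn : ℕ → Measure E) (hμn : ∀ n, μn n = volume.withDensity (ρn n))
    (hlim : ∀ φ : E → ℝ, Continuous φ → HasCompactSupport φ → (∀ x, 0 ≤ φ x) →
      ∫⁻ x, ENNReal.ofReal (φ x) ∂μ ≤
        atTop.liminf fun n => ∫⁻ x, ENNReal.ofReal (φ x) ∂(μn n))
    {c : E} {r : ℝ} (hr : 0 < r)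
    {C : ℝ≥0∞} (hCtop : C ≠ ⊤) (hC : ∀ n, ∫⁻ x in Metric.ball c (r + 1), ρn n x ^ 2 ≤ C)
    {A : Set E} (hA : MeasurableSet A) (hAB : A ⊆ Metric.ball c r) :
    μ A ≤ atTop.liminf fun n => μn n A := by
  have hAfin : volume A ≠ ⊤ :=
    ((measure_mono hAB).trans_lt measure_ball_lt_top).ne
  refine ENNReal.le_of_forall_pos_le_add fun ε hε _ => ?_
  -- choose t with C / t ≤ ε/2
  set t : ℝ≥0∞ := C / (ε / 2) + 1 with ht
  have hεhalf0 : ((ε : ℝ≥0∞) / 2) ≠ 0 := by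
    simp [ENNReal.div_eq_zero_iff, hε.ne']
  have hεhalftop : ((ε : ℝ≥0∞) / 2) ≠ ⊤ := by
    exact (ENNReal.div_lt_top ENNReal.coe_ne_top (by norm_num)).ne
  have ht0 : t ≠ 0 := by simp [ht]
  have httop : t ≠ ⊤ :=
    ENNReal.add_ne_top.mpr ⟨(ENNReal.div_lt_top hCtop hεhalf0).ne, ENNReal.one_ne_top⟩
  have hCt : C / t ≤ (ε : ℝ≥0∞) / 2 := by
    rw [ENNReal.div_le_iff_le_mul (Or.inl ht0) (Or.inl httop)]
    calc C = (ε : ℝ≥0∞) / 2 * (C / ((ε : ℝ≥0∞) / 2)) :=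
          (ENNReal.mul_div_cancel hεhalf0 hεhalftop).symm
      _ ≤ (ε : ℝ≥0∞) / 2 * t := by
          refine mul_le_mul_right ?_ _
          exact ht ▸ le_add_right le_rfl
  set δ : ℝ≥0∞ := ((ε : ℝ≥0∞) / 2) / t with hδ
  have hδ0 : δ ≠ 0 := by
    rw [hδ, ne_eq, ENNReal.div_eq_zero_iff, not_or]
    exact ⟨hεhalf0, httop⟩
  have htδ : t * δ = (ε : ℝ≥0∞) / 2 := ENNReal.mul_div_cancel ht0 httop
  obtain ⟨U, hAU, hUo, hUlt⟩ := Set.exists_isOpen_lt_add A hAfin hδ0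
  set V : Set E := U ∩ Metric.ball c (r + 1) with hV
  have hVo : IsOpen V := hUo.inter Metric.isOpen_ball
  have hAV : A ⊆ V := Set.subset_inter hAU (hAB.trans (Metric.ball_subset_ball (by linarith)))
  have hVAvol : volume (V \ A) ≤ δ := by
    refine le_trans (measure_mono (Set.diff_subset_diff_left Set.inter_subset_left)) ?_
    rw [measure_diff hAU hA.nullMeasurableSet hAfin]
    exact tsub_le_iff_right.mpr (by rw [add_comm]; exact hUlt.le)
  have hbound : ∀ n, μn n V ≤ μn n A + (ε : ℝ≥0∞) := by
    intro n
    have hsplit : μn n V ≤ μn n A + μn n (V \ A) := by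
      refine le_trans (measure_mono ?_) (measure_union_le A (V \ A))
      intro x hx
      by_cases hxA : x ∈ A
      · exact Or.inl hxA
      · exact Or.inr ⟨hx, hxA⟩
    have hVA : μn n (V \ A) ≤ (ε : ℝ≥0∞) := by
      have hmVA : MeasurableSet (V \ A) := (hVo.measurableSet).diff hA
      rw [hμn n, withDensity_apply _ hmVA]
      have hpt : ∀ x, ρn n x ≤ t + ρn n x ^ 2 / t := by
        intro x
        rcases le_total (ρn n x) t with h | h
        · exact le_add_right h
        · refine le_add_left ?_
          rw [ENNReal.le_div_iff_mul_le (Or.inl ht0) (Or.inl httop)]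
          calc ρn n x * t ≤ ρn n x * ρn n x := mul_le_mul_right h _
            _ = ρn n x ^ 2 := (sq _).symm
      calc ∫⁻ x in V \ A, ρn n x ≤ ∫⁻ x in V \ A, (t + ρn n x ^ 2 / t) :=
            lintegral_mono hpt
        _ = t * volume (V \ A) + (∫⁻ x in V \ A, ρn n x ^ 2) / t := by
            rw [lintegral_add_left measurable_const]
            congr 1
            · simp [lintegral_const, Measure.restrict_apply MeasurableSet.univ]
            · simp only [div_eq_mul_inv]
              rw [lintegral_mul_const _ ((hρn n).pow_const 2)]
        _ ≤ t * δ + C / t := by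
            gcongr
            · refine le_trans (lintegral_mono_set ?_) (hC n)
              exact (Set.diff_subset.trans Set.inter_subset_right)
        _ ≤ (ε : ℝ≥0∞) / 2 + (ε : ℝ≥0∞) / 2 := add_le_add htδ.le hCt
        _ = (ε : ℝ≥0∞) := ENNReal.add_halves _
    exact hsplit.trans (add_le_add le_rfl hVA)
  calc μ A ≤ μ V := measure_mono hAV
    _ ≤ atTop.liminf fun n => μn n V := aux_open_le μ μn hlim hVo
    _ ≤ atTop.liminf fun n => μn n A + (ε : ℝ≥0∞) :=
        liminf_le_liminf (Eventually.of_forall hbound)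
    _ ≤ (atTop.liminf fun n => μn n A) + (ε : ℝ≥0∞) := aux_liminf_add_const _ _

/-- Pairing: `∫ f dμ ≤ liminf ∫ f dμn` for measurable `f` vanishing outside a ball. -/
lemma aux_pair (μ : Measure E) [IsFiniteMeasure μ]
    (ρn : ℕ → E → ENNReal) (hρn : ∀ n, Measurable (ρn n))
    (μn : ℕ → Measure E) (hμn : ∀ n, μn n = volume.withDensity (ρn n))
    (hlim : ∀ φ : E → ℝ, Continuous φ → HasCompactSupport φ → (∀ x, 0 ≤ φ x) →
      ∫⁻ x, ENNReal.ofReal (φ x) ∂μ ≤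
        atTop.liminf fun n => ∫⁻ x, ENNReal.ofReal (φ x) ∂(μn n))
    {c : E} {r : ℝ} (hr : 0 < r)
    {C : ℝ≥0∞} (hCtop : C ≠ ⊤) (hC : ∀ n, ∫⁻ x in Metric.ball c (r + 1), ρn n x ^ 2 ≤ C)
    {f : E → ℝ≥0∞} (hf : Measurable f) (hsupp : ∀ x, x ∉ Metric.ball c r → f x = 0) :
    ∫⁻ x, f x ∂μ ≤ atTop.liminf fun n => ∫⁻ x, f x ∂(μn n) := by
  rw [lintegral_eq_iSup_eapprox_lintegral hf]
  refine iSup_le fun k => ?_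
  set s := SimpleFunc.eapprox f k with hs
  have hsle : ∀ x, s x ≤ f x := by
    intro x
    exact le_of_le_of_eq (le_iSup (fun n => SimpleFunc.eapprox f n x) k)
      (SimpleFunc.iSup_eapprox_apply hf x)
  have hfiber : ∀ b : ℝ≥0∞, b ≠ 0 → s ⁻¹' {b} ⊆ Metric.ball c r := by
    intro b hb x hx
    by_contra hxB
    have h0 : f x = 0 := hsupp x hxB
    have : s x ≤ 0 := h0 ▸ hsle x
    simp only [Set.mem_preimage, Set.mem_singleton_iff] at hx
    exact hb (hx ▸ le_antisymm this zero_le)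
  have key : ∀ b ∈ s.range, b * μ (s ⁻¹' {b}) ≤
      atTop.liminf fun n => b * μn n (s ⁻¹' {b}) := by
    intro b _
    rcases eq_or_ne b 0 with rfl | hb
    · simp
    · refine le_trans (mul_le_mul_right ?_ b) (aux_mul_liminf b _)
      exact aux_set_le μ ρn hρn μn hμn hlim hr hCtop hC
        (s.measurableSet_fiber b) (hfiber b hb)
  calc s.lintegral μ = ∑ b ∈ s.range, b * μ (s ⁻¹' {b}) := rfl
    _ ≤ ∑ b ∈ s.range, atTop.liminf fun n => b * μn n (s ⁻¹' {b}) :=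
        Finset.sum_le_sum key
    _ ≤ atTop.liminf fun n => ∑ b ∈ s.range, b * μn n (s ⁻¹' {b}) :=
        aux_sum_liminf _ _
    _ ≤ atTop.liminf fun n => ∫⁻ x, f x ∂(μn n) := by
        refine liminf_le_liminf (Eventually.of_forall fun n => ?_)
        have : (∑ b ∈ s.range, b * μn n (s ⁻¹' {b})) = s.lintegral (μn n) := rfl
        rw [this, ← SimpleFunc.lintegral_eq_lintegral]
        exact lintegral_mono hsle

end Main

theorem stmt7 (d : ℕ) (μ : Measure (EuclideanSpace ℝ (Fin d))) [IsFiniteMeasure μ]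
    (ρn : ℕ → EuclideanSpace ℝ (Fin d) → ENNReal) (hρn : ∀ n, Measurable (ρn n))
    (μn : ℕ → Measure (EuclideanSpace ℝ (Fin d)))
    (hμn : ∀ n, μn n = volume.withDensity (ρn n))
    (hL2 : ∀ (c : EuclideanSpace ℝ (Fin d)) (r : ℝ), 0 < r →
      ∃ C : ENNReal, C < ⊤ ∧ ∀ n, ∫⁻ x in Metric.ball c r, ρn n x ^ 2 ≤ C)
    (hlim : ∀ φ : EuclideanSpace ℝ (Fin d) → ℝ, Continuous φ → HasCompactSupport φ →
      (∀ x, 0 ≤ φ x) →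
      ∫⁻ x, ENNReal.ofReal (φ x) ∂μ ≤
        atTop.liminf fun n => ∫⁻ x, ENNReal.ofReal (φ x) ∂(μn n)) :
    μ ≪ volume ∧
      ∀ (c : EuclideanSpace ℝ (Fin d)) (r : ℝ), 0 < r →
        ∫⁻ x in Metric.ball c r, μ.rnDeriv volume x ^ 2 ≤
          atTop.liminf fun n => ∫⁻ x in Metric.ball c r, ρn n x ^ 2 := by
  have hAC : μ ≪ volume := by
    refine Measure.AbsolutelyContinuous.mk fun S hS hS0 => ?_
    have hball : ∀ k : ℕ, μ (S ∩ Metric.ball 0 ((k : ℝ) + 1)) = 0 := by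
      intro k
      obtain ⟨C, hClt, hC⟩ := hL2 0 ((k : ℝ) + 1 + 1) (by positivity)
      refine le_antisymm ?_ zero_le
      refine (aux_set_le μ ρn hρn μn hμn hlim (c := 0) (r := (k : ℝ) + 1) (by positivity)
        hClt.ne hC (hS.inter measurableSet_ball) Set.inter_subset_right).trans ?_
      have hz : ∀ n, μn n (S ∩ Metric.ball 0 ((k : ℝ) + 1)) = 0 := by
        intro n
        rw [hμn n]
        exact (withDensity_absolutelyContinuous volume (ρn n))
          (measure_mono_null Set.inter_subset_left hS0)
      simp only [hz]
      simp [liminf_const]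
    have hsub : S ⊆ ⋃ k : ℕ, S ∩ Metric.ball 0 ((k : ℝ) + 1) := by
      intro x hx
      obtain ⟨k, hk⟩ := exists_nat_gt ‖x‖
      refine Set.mem_iUnion.mpr ⟨k, hx, ?_⟩
      rw [Metric.mem_ball, dist_zero_right]
      linarith
    refine le_antisymm ?_ zero_le
    calc μ S ≤ μ (⋃ k : ℕ, S ∩ Metric.ball 0 ((k : ℝ) + 1)) := measure_mono hsub
      _ ≤ ∑' k : ℕ, μ (S ∩ Metric.ball 0 ((k : ℝ) + 1)) := measure_iUnion_le _
      _ = 0 := by simp [hball]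
  refine ⟨hAC, fun c r hr => ?_⟩
  obtain ⟨C, hClt, hC⟩ := hL2 c (r + 1) (by linarith)
  set ρ := μ.rnDeriv volume with hρdef
  have hρmeas : Measurable ρ := Measure.measurable_rnDeriv μ volume
  have hwd : volume.withDensity ρ = μ := Measure.withDensity_rnDeriv_eq μ volume hAC
  set B := Metric.ball c r with hB
  set L := atTop.liminf fun n => ∫⁻ x in B, ρn n x ^ 2 with hL
  set f : ℕ → EuclideanSpace ℝ (Fin d) → ℝ≥0∞ :=
    fun m => B.indicator (fun y => min (ρ y) (m : ℝ≥0∞)) with hf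
  have hfmeas : ∀ m, Measurable (f m) := fun m =>
    (hρmeas.min measurable_const).indicator measurableSet_ball
  have hfsupp : ∀ m x, x ∉ B → f m x = 0 := fun m x hx => Set.indicator_of_notMem hx _
  set S : ℕ → ℝ≥0∞ := fun m => ∫⁻ x, f m x ^ 2 with hSdef
  have hSfin : ∀ m, S m ≠ ⊤ := by
    intro m
    have hb : ∀ x, f m x ^ 2 ≤ B.indicator (fun _ => ((m : ℝ≥0∞)) ^ 2) x := by
      intro x
      by_cases hx : x ∈ B
      · simp only [hf, Set.indicator_of_mem hx]
        gcongr
        exact min_le_right _ _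
      · simp [hf, Set.indicator_of_notMem hx]
    refine ne_top_of_le_ne_top ?_ (lintegral_mono hb)
    rw [lintegral_indicator_const measurableSet_ball]
    exact ENNReal.mul_ne_top (by simp) measure_ball_lt_top.ne
  have hkey : ∀ m, S m ≤ L := by
    intro m
    have h1 : S m ≤ ∫⁻ x, (ρ * f m) x := by
      refine lintegral_mono fun x => ?_
      by_cases hx : x ∈ B
      · simp only [hf, Pi.mul_apply, Set.indicator_of_mem hx, sq]
        exact mul_le_mul_left (min_le_left _ _) _
      · simp [hf, Pi.mul_apply, Set.indicator_of_notMem hx]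
    have h2 : ∫⁻ x, f m x ∂μ = ∫⁻ x, (ρ * f m) x := by
      rw [← hwd, lintegral_withDensity_eq_lintegral_mul volume hρmeas (hfmeas m)]
    have h3 : ∫⁻ x, f m x ∂μ ≤ atTop.liminf fun n => ∫⁻ x, f m x ∂(μn n) :=
      aux_pair μ ρn hρn μn hμn hlim hr hClt.ne hC (hfmeas m) (hfsupp m)
    have h4 : ∀ n, 2 * ∫⁻ x, f m x ∂(μn n) ≤ (∫⁻ x in B, ρn n x ^ 2) + S m := by
      intro n
      rw [hμn n, lintegral_withDensity_eq_lintegral_mul volume (hρn n) (hfmeas m)]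
      have hpt : ∀ x, 2 * ((ρn n * f m) x) ≤
          B.indicator (fun y => ρn n y ^ 2) x + f m x ^ 2 := by
        intro x
        by_cases hx : x ∈ B
        · rw [Set.indicator_of_mem hx]
          exact aux_two_mul _ _
        · simp [hf, Pi.mul_apply, Set.indicator_of_notMem hx]
      calc 2 * ∫⁻ x, (ρn n * f m) x = ∫⁻ x, 2 * ((ρn n * f m) x) :=
            (lintegral_const_mul 2 ((hρn n).mul (hfmeas m))).symm
        _ ≤ ∫⁻ x, (B.indicator (fun y => ρn n y ^ 2) x + f m x ^ 2) := lintegral_mono hpt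
        _ = (∫⁻ x in B, ρn n x ^ 2) + S m := by
            rw [lintegral_add_left (((hρn n).pow_const 2).indicator measurableSet_ball),
              lintegral_indicator measurableSet_ball]
    have h5 : S m + S m ≤ L + S m := by
      calc S m + S m = 2 * S m := (two_mul _).symm
        _ ≤ 2 * ∫⁻ x, f m x ∂μ := by
            rw [h2]; exact mul_le_mul_right h1 2
        _ ≤ 2 * atTop.liminf (fun n => ∫⁻ x, f m x ∂(μn n)) := mul_le_mul_right h3 2
        _ ≤ atTop.liminf (fun n => 2 * ∫⁻ x, f m x ∂(μn n)) := aux_mul_liminf 2 _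
        _ ≤ atTop.liminf (fun n => (∫⁻ x in B, ρn n x ^ 2) + S m) :=
            liminf_le_liminf (Eventually.of_forall h4)
        _ ≤ L + S m := aux_liminf_add_const _ _
    exact (ENNReal.add_le_add_iff_right (hSfin m)).mp h5
  -- pass to the limit m → ∞
  have hsup : ∀ x, (⨆ m : ℕ, f m x ^ 2) = B.indicator (fun y => ρ y ^ 2) x := by
    intro x
    by_cases hx : x ∈ B
    · simp only [hf, Set.indicator_of_mem hx]
      refine le_antisymm (iSup_le fun m => by gcongr; exact min_le_left _ _) ?_
      rcases eq_or_ne (ρ x) ⊤ with htop | hfin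
      · have hbody : ∀ m : ℕ, min (ρ x) (m : ℝ≥0∞) ^ 2 = (m : ℝ≥0∞) ^ 2 := fun m => by
          rw [htop, min_eq_right (le_top : (m : ℝ≥0∞) ≤ ⊤)]
        simp_rw [hbody, htop]
        have h2top : (⊤ : ℝ≥0∞) ^ 2 = ⊤ := by simp
        rw [h2top]
        calc (⊤ : ℝ≥0∞) = ⨆ m : ℕ, (m : ℝ≥0∞) := ENNReal.iSup_natCast.symm
          _ ≤ ⨆ m : ℕ, (m : ℝ≥0∞) ^ 2 := by
              refine iSup_mono fun m => ?_
              rcases Nat.eq_zero_or_pos m with rfl | hm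
              · simp
              · have h1m : (1 : ℝ≥0∞) ≤ (m : ℝ≥0∞) := by exact_mod_cast hm
                exact le_self_pow₀ h1m two_ne_zero
      · obtain ⟨m, hm⟩ := ENNReal.exists_nat_gt hfin
        refine le_trans ?_ (le_iSup (fun m : ℕ => min (ρ x) (m : ℝ≥0∞) ^ 2) m)
        rw [min_eq_left hm.le]
    · simp [hf, Set.indicator_of_notMem hx]
  have hmono : Monotone fun m : ℕ => fun x => f m x ^ 2 := by
    intro m m' hmm' x
    dsimp only
    gcongr
    by_cases hx : x ∈ B
    · simp only [hf, Set.indicator_of_mem hx]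
      exact min_le_min le_rfl (by exact_mod_cast hmm')
    · simp [hf, Set.indicator_of_notMem hx]
  calc ∫⁻ x in B, ρ x ^ 2 = ∫⁻ x, B.indicator (fun y => ρ y ^ 2) x :=
        (lintegral_indicator measurableSet_ball _).symm
    _ = ∫⁻ x, ⨆ m : ℕ, f m x ^ 2 := by simp_rw [hsup]
    _ = ⨆ m : ℕ, S m := lintegral_iSup (fun m => (hfmeas m).pow_const 2) hmono
    _ ≤ L := iSup_le hkey
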